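/- Let N > 0 and δ > 0, and let p_N be the probability distribution on ℕ given by p_N(n) = (1/(N+1))·(N/(N+1))^n. Then for every k ≥ 1, the sum over all tuples n^k = (n_1, …, n_k) ∈ ℕ^k with n_1 + ⋯ + n_k ≥ k·(N+δ) of the product p_N(n_1)⋯p_N(n_k) is at most exp(−k·Λ(δ,N)), where Λ(δ,N) = (N+δ)·ln((N+δ)/N) − (N+δ+1)·ln((N+δ+1)/(N+1)). -/

import Mathlib

set_option maxHeartbeats 1000000

lemma hasSum_pi_prod {g : ℕ → ℝ} (hg0 : ∀ n, 0 ≤ g n) (hg : Summable g) (k : ℕ) :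
    HasSum (fun n : Fin k → ℕ => ∏ i, g (n i)) ((∑' n, g n) ^ k) := by
  induction k with
  | zero =>
      have h1 : (fun n : Fin 0 → ℕ => ∏ i, g (n i)) = fun _ => 1 := by
        funext n; simp
      rw [h1, pow_zero]
      exact hasSum_single (f := fun _ : Fin 0 → ℕ => (1 : ℝ)) default
        (fun b' hb' => absurd (Subsingleton.elim b' default) hb')
  | succ k ih =>
      have hsum : Summable fun p : ℕ × (Fin k → ℕ) => g p.1 * ∏ i, g (p.2 i) :=
        Summable.mul_of_nonneg (f := g) (g := fun n : Fin k → ℕ => ∏ i, g (n i))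
          hg ih.summable hg0
          (fun n => Finset.prod_nonneg fun i _ => hg0 _)
      have hmul : HasSum (fun p : ℕ × (Fin k → ℕ) => g p.1 * ∏ i, g (p.2 i))
          ((∑' n, g n) ^ (k+1)) := by
        have := hg.hasSum.mul ih hsum
        simpa [pow_succ, mul_comm] using this
      have key : HasSum ((fun n : Fin (k+1) → ℕ => ∏ i, g (n i)) ∘
          (Fin.consEquiv (fun _ : Fin (k+1) => ℕ)))
          ((∑' n, g n) ^ (k+1)) := by
        have hcomp : ((fun n : Fin (k+1) → ℕ => ∏ i, g (n i)) ∘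
            (Fin.consEquiv (fun _ : Fin (k+1) => ℕ)))
            = fun p : ℕ × (Fin k → ℕ) => g p.1 * ∏ i, g (p.2 i) := by
          funext p
          simp [Fin.consEquiv, Fin.prod_univ_succ]
        rw [hcomp]; exact hmul
      exact (Equiv.hasSum_iff _).mp key


/-- Upper tail bound (correct detection case of Lemma 2): for the geometric
photon-number distribution `p_N(n) = (1/(N+1))·(N/(N+1))^n` of a thermal state with
mean `N`, the probability that `k` i.i.d. samples sum to at least `k(N+δ)` is at
most `exp(−k·Λ(δ,N))`. -/
theorem thermal_upper_tail (N δ : ℝ) (hN : 0 < N) (hδ : 0 < δ) (k : ℕ) (hk : 1 ≤ k) :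
    (∑' n : Fin k → ℕ,
      if (k : ℝ) * (N + δ) ≤ ∑ i, (n i : ℝ)
      then ∏ i, (1 / (N + 1)) * (N / (N + 1)) ^ (n i)
      else 0)
    ≤ Real.exp (-(k : ℝ) *
        ((N + δ) * Real.log ((N + δ) / N) -
          (N + δ + 1) * Real.log ((N + δ + 1) / (N + 1)))) := by
  set m : ℝ := N + δ with hm
  have hm0 : 0 < m := by positivity
  have hNm : N < m := by simp [hm]; linarith
  have hN1 : (0:ℝ) < N + 1 := by linarith
  have hm1 : (0:ℝ) < m + 1 := by linarith
  -- the tilt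
  have hargpos : 0 < m * (N + 1) / (N * (m + 1)) := by positivity
  set t : ℝ := Real.log (m * (N + 1) / (N * (m + 1))) with htdef
  have het : Real.exp t = m * (N + 1) / (N * (m + 1)) := Real.exp_log hargpos
  have ht0 : 0 ≤ t := by
    apply Real.log_nonneg
    rw [le_div_iff₀ (by positivity)]
    nlinarith
  -- tilted ratio c = m/(m+1)
  have hc : N / (N + 1) * Real.exp t = m / (m + 1) := by
    rw [het]; field_simp
  set c : ℝ := m / (m + 1) with hcdef
  have hc0 : 0 ≤ c := by positivity
  have hc1 : c < 1 := by rw [hcdef, div_lt_one hm1]; linarith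
  -- tilted one-sample distribution g
  set g : ℕ → ℝ := fun n => (1 / (N + 1)) * c ^ n with hgdef
  have hg0 : ∀ n, 0 ≤ g n := fun n => by positivity
  have hgsum : Summable g := (summable_geometric_of_lt_one hc0 hc1).mul_left _
  have hgtsum : ∑' n, g n = (m + 1) / (N + 1) := by
    rw [hgdef]
    rw [tsum_mul_left, tsum_geometric_of_lt_one hc0 hc1]
    have : 1 - c = 1 / (m + 1) := by rw [hcdef]; field_simp; ring
    rw [this]
    field_simp
  -- the product sum
  have hG := hasSum_pi_prod hg0 hgsum k
  rw [hgtsum] at hG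
  set C : ℝ := Real.exp (-(t * ((k : ℝ) * m)))
  have hGC : HasSum (fun n : Fin k → ℕ => C * ∏ i, g (n i))
      (C * ((m + 1) / (N + 1)) ^ k) := hG.mul_left C
  -- termwise bound
  have hterm : ∀ n : Fin k → ℕ,
      (if (k : ℝ) * m ≤ ∑ i, (n i : ℝ)
       then ∏ i, (1 / (N + 1)) * (N / (N + 1)) ^ (n i) else 0)
      ≤ C * ∏ i, g (n i) := by
    intro n
    have hprod : ∏ i, g (n i)
        = (∏ i, (1 / (N + 1)) * (N / (N + 1)) ^ (n i)) *
          Real.exp (t * ∑ i, (n i : ℝ)) := by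
      rw [Finset.mul_sum]
      rw [Real.exp_sum, ← Finset.prod_mul_distrib]
      apply Finset.prod_congr rfl
      intro i _
      have hcp : c ^ (n i) = (N / (N + 1)) ^ (n i) * Real.exp (t * (n i : ℝ)) := by
        rw [← hc, mul_pow, mul_comm t, Real.exp_nat_mul]
      show (1 / (N + 1)) * c ^ (n i) = _
      rw [hcp]; ring
    split_ifs with h
    · rw [hprod]
      have hP0 : 0 ≤ ∏ i, (1 / (N + 1)) * (N / (N + 1)) ^ (n i) :=
        Finset.prod_nonneg fun i _ => by positivity
      calc ∏ i, (1 / (N + 1)) * (N / (N + 1)) ^ (n i)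
          = (∏ i, (1 / (N + 1)) * (N / (N + 1)) ^ (n i)) * 1 := by ring
        _ ≤ (∏ i, (1 / (N + 1)) * (N / (N + 1)) ^ (n i)) *
            Real.exp (t * (∑ i, (n i : ℝ) - (k : ℝ) * m)) := by
            apply mul_le_mul_of_nonneg_left _ hP0
            rw [← Real.exp_zero]
            apply Real.exp_le_exp.mpr
            have : 0 ≤ ∑ i, (n i : ℝ) - (k : ℝ) * m := by linarith
            positivity
        _ = C * ((∏ i, (1 / (N + 1)) * (N / (N + 1)) ^ (n i)) *
            Real.exp (t * ∑ i, (n i : ℝ))) := by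
            have hE : Real.exp (t * (∑ i, (n i : ℝ) - (k : ℝ) * m))
                = C * Real.exp (t * ∑ i, (n i : ℝ)) := by
              show _ = Real.exp (-(t * ((k : ℝ) * m))) * _
              rw [← Real.exp_add]
              congr 1
              ring
            rw [hE]; ring
    · positivity
  have hF0 : ∀ n : Fin k → ℕ,
      0 ≤ (if (k : ℝ) * m ≤ ∑ i, (n i : ℝ)
       then ∏ i, (1 / (N + 1)) * (N / (N + 1)) ^ (n i) else 0) := by
    intro n; split_ifs
    · exact Finset.prod_nonneg fun i _ => by positivity
    · exact le_rfl
  have hFsum : Summable (fun n : Fin k → ℕ =>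
      if (k : ℝ) * m ≤ ∑ i, (n i : ℝ)
      then ∏ i, (1 / (N + 1)) * (N / (N + 1)) ^ (n i) else 0) :=
    Summable.of_nonneg_of_le hF0 hterm hGC.summable
  have hmain := Summable.tsum_le_tsum hterm hFsum hGC.summable
  rw [hGC.tsum_eq] at hmain
  refine hmain.trans_eq ?_
  -- closed form equality
  have hlog : ((m + 1) / (N + 1)) ^ k
      = Real.exp ((k : ℝ) * Real.log ((m + 1) / (N + 1))) := by
    rw [Real.exp_nat_mul, Real.exp_log (by positivity)]
  rw [hlog, ← Real.exp_add]
  congr 1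
  have htval : t = Real.log (m / N) - Real.log ((m + 1) / (N + 1)) := by
    rw [htdef, ← Real.log_div (by positivity) (by positivity)]
    congr 1
    field_simp
  rw [htval]
  ring
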